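/- For every natural number n, the number of permutations of length n in the juxtaposition class Av(231|12) equals the number of permutations of length n in the juxtaposition class Av(321|12). (There is a bijection θ : Av(231|12) → Av(321|12).) -/

import Mathlib

/-- `σ` contains an occurrence of the pattern `π` using only positions in `S`. -/
def ContainsIn {n m : ℕ} (σ : Equiv.Perm (Fin n)) (π : Equiv.Perm (Fin m))
    (S : Set (Fin n)) : Prop :=
  ∃ f : Fin m → Fin n, StrictMono f ∧ (∀ s, f s ∈ S) ∧
    ∀ s t : Fin m, σ (f s) < σ (f t) ↔ π s < π t

/-- `σ` contains an occurrence of the pattern `π`. -/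
def Contains {n m : ℕ} (σ : Equiv.Perm (Fin n)) (π : Equiv.Perm (Fin m)) : Prop :=
  ContainsIn σ π Set.univ

/-- `σ` avoids the pattern `π`. -/
def Avoids {n m : ℕ} (σ : Equiv.Perm (Fin n)) (π : Equiv.Perm (Fin m)) : Prop :=
  ¬ Contains σ π

/-- `σ` lies in the juxtaposition class `Av(P|Q)`: positions split at some cut `k`
(`0 ≤ k ≤ n`), no occurrence of `P` within the first `k` positions and no occurrence
of `Q` within the remaining positions. -/
def JuxtAv {n p q : ℕ} (P : Equiv.Perm (Fin p)) (Q : Equiv.Perm (Fin q))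
    (σ : Equiv.Perm (Fin n)) : Prop :=
  ∃ k ≤ n, ¬ ContainsIn σ P {i : Fin n | (i : ℕ) < k} ∧
    ¬ ContainsIn σ Q {i : Fin n | k ≤ (i : ℕ)}

noncomputable def p231 : Equiv.Perm (Fin 3) :=
  Equiv.ofBijective (![1,2,0] : Fin 3 → Fin 3) (by decide)

noncomputable def p321 : Equiv.Perm (Fin 3) :=
  Equiv.ofBijective (![2,1,0] : Fin 3 → Fin 3) (by decide)

noncomputable def p12 : Equiv.Perm (Fin 2) :=
  Equiv.ofBijective (![0,1] : Fin 2 → Fin 2) (by decide)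


namespace AvJuxt

open Finset Function

variable {n : ℕ}

def Has231 {m : ℕ} (w : Fin m → Fin n) : Prop :=
  ∃ i j l : Fin m, i < j ∧ j < l ∧ w l < w i ∧ w i < w j

def Has321 {m : ℕ} (w : Fin m → Fin n) : Prop :=
  ∃ i j l : Fin m, i < j ∧ j < l ∧ w j < w i ∧ w l < w j

def Ok231 {m : ℕ} (w : Fin m → Fin n) (t : Fin n) : Prop :=
  ∀ i j : Fin m, i < j → t < w i → t < w j → w j < w i

def Ok321 {m : ℕ} (w : Fin m → Fin n) (t : Fin n) : Prop :=
  ∀ i j : Fin m, i < j → t < w i → t < w j → w i < w j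

lemma Ok231.mono {m : ℕ} {w : Fin m → Fin n} {t t' : Fin n} (h : Ok231 w t) (htt : t ≤ t') :
    Ok231 w t' := fun i j hij hi hj => h i j hij (lt_of_le_of_lt htt hi) (lt_of_le_of_lt htt hj)

lemma Ok321.mono {m : ℕ} {w : Fin m → Fin n} {t t' : Fin n} (h : Ok321 w t) (htt : t ≤ t') :
    Ok321 w t' := fun i j hij hi hj => h i j hij (lt_of_le_of_lt htt hi) (lt_of_le_of_lt htt hj)

/-- The basic counted sets. -/
abbrev W231 (m : ℕ) (V : Finset (Fin n)) (t : Fin n) : Type :=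
  {w : Fin m → Fin n // (Injective w ∧ Finset.univ.image w = V) ∧ (¬ Has231 w ∧ Ok231 w t)}

abbrev W321 (m : ℕ) (V : Finset (Fin n)) (t : Fin n) : Type :=
  {w : Fin m → Fin n // (Injective w ∧ Finset.univ.image w = V) ∧ (¬ Has321 w ∧ Ok321 w t)}

instance (m : ℕ) (V : Finset (Fin n)) (t : Fin n) : Finite (W231 (n := n) m V t) :=
  Subtype.finite

instance (m : ℕ) (V : Finset (Fin n)) (t : Fin n) : Finite (W321 (n := n) m V t) :=
  Subtype.finite

section Snoc

variable {m : ℕ} {w' : Fin m → Fin n} {r : Fin n}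

lemma init_inj {w : Fin (m+1) → Fin n} (hw : Injective w) : Injective (Fin.init w) :=
  fun i j h => Fin.castSucc_injective m (hw h)

lemma init_image {w : Fin (m+1) → Fin n} (hw : Injective w) {V : Finset (Fin n)}
    (hV : Finset.univ.image w = V) (hr : w (Fin.last m) = r) :
    Finset.univ.image (Fin.init w) = V.erase r := by
  ext x
  simp only [mem_image, mem_univ, true_and, mem_erase]
  constructor
  · rintro ⟨i, rfl⟩
    refine ⟨?_, ?_⟩
    · rw [← hr]
      intro h
      exact absurd (hw h) (Fin.ne_last_of_lt (Fin.castSucc_lt_last i) : _ ≠ _)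
    · rw [← hV]
      simp only [mem_image, mem_univ, true_and]
      exact ⟨i.castSucc, rfl⟩
  · rintro ⟨hx, hxV⟩
    rw [← hV] at hxV
    simp only [mem_image, mem_univ, true_and] at hxV
    obtain ⟨i, rfl⟩ := hxV
    rcases Fin.eq_castSucc_or_eq_last i with ⟨j, rfl⟩ | rfl
    · exact ⟨j, rfl⟩
    · exact absurd hr (by simpa using hx)

lemma snoc_inj (hw' : Injective w') (hr : r ∉ Finset.univ.image w') :
    Injective (Fin.snoc w' r : Fin (m+1) → Fin n) := by
  intro i j h
  induction i using Fin.lastCases with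
  | last =>
    induction j using Fin.lastCases with
    | last => rfl
    | cast j =>
      rw [Fin.snoc_last, Fin.snoc_castSucc] at h
      exact absurd (by simp only [mem_image, mem_univ, true_and]; exact ⟨j, h.symm⟩) hr
  | cast i =>
    induction j using Fin.lastCases with
    | last =>
      rw [Fin.snoc_last, Fin.snoc_castSucc] at h
      exact absurd (by simp only [mem_image, mem_univ, true_and]; exact ⟨i, h⟩) hr
    | cast j =>
      rw [Fin.snoc_castSucc, Fin.snoc_castSucc] at h
      rw [hw' h]

lemma snoc_image {V : Finset (Fin n)} (hr : r ∈ V)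
    (hV : Finset.univ.image w' = V.erase r) :
    Finset.univ.image (Fin.snoc w' r : Fin (m+1) → Fin n) = V := by
  ext x
  simp only [mem_image, mem_univ, true_and]
  constructor
  · rintro ⟨i, rfl⟩
    induction i using Fin.lastCases with
    | last => simpa using hr
    | cast i =>
      rw [Fin.snoc_castSucc]
      have : w' i ∈ V.erase r := by
        rw [← hV]; simp only [mem_image, mem_univ, true_and]; exact ⟨i, rfl⟩
      exact mem_of_mem_erase this
  · intro hx
    by_cases hxr : x = r
    · exact ⟨Fin.last m, by simp [hxr]⟩
    · have : x ∈ Finset.univ.image w' := by rw [hV]; exact mem_erase.2 ⟨hxr, hx⟩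
      simp only [mem_image, mem_univ, true_and] at this
      obtain ⟨i, rfl⟩ := this
      exact ⟨i.castSucc, by rw [Fin.snoc_castSucc]⟩

end Snoc



section Trans
variable {m : ℕ} {w' : Fin m → Fin n} {r t : Fin n}

lemma has231_snoc :
    Has231 (Fin.snoc w' r : Fin (m+1) → Fin n) ↔
      Has231 w' ∨ ∃ i j : Fin m, i < j ∧ r < w' i ∧ w' i < w' j := by
  constructor
  · rintro ⟨i, j, l, hij, hjl, h1, h2⟩
    induction l using Fin.lastCases with
    | last =>
      obtain ⟨i, rfl⟩ := Fin.exists_castSucc_eq.2 (Fin.ne_last_of_lt (lt_trans hij hjl))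
      obtain ⟨j, rfl⟩ := Fin.exists_castSucc_eq.2 (Fin.ne_last_of_lt hjl)
      rw [Fin.snoc_last] at h1
      rw [Fin.snoc_castSucc] at h1 h2
      rw [Fin.snoc_castSucc] at h2
      exact Or.inr ⟨i, j, by simpa using hij, h1, h2⟩
    | cast l =>
      obtain ⟨i, rfl⟩ := Fin.exists_castSucc_eq.2 (Fin.ne_last_of_lt (lt_trans (lt_trans hij hjl) (Fin.castSucc_lt_last l)))
      obtain ⟨j, rfl⟩ := Fin.exists_castSucc_eq.2 (Fin.ne_last_of_lt (lt_trans hjl (Fin.castSucc_lt_last l)))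
      simp only [Fin.snoc_castSucc] at h1 h2
      exact Or.inl ⟨i, j, l, by simpa using hij, by simpa using hjl, h1, h2⟩
  · rintro (⟨i, j, l, hij, hjl, h1, h2⟩ | ⟨i, j, hij, h1, h2⟩)
    · exact ⟨i.castSucc, j.castSucc, l.castSucc, by simpa using hij, by simpa using hjl,
        by simpa using h1, by simpa using h2⟩
    · exact ⟨i.castSucc, j.castSucc, Fin.last m, by simpa using hij, Fin.castSucc_lt_last j,
        by simpa using h1, by simpa using h2⟩

lemma has321_snoc :
    Has321 (Fin.snoc w' r : Fin (m+1) → Fin n) ↔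
      Has321 w' ∨ ∃ i j : Fin m, i < j ∧ w' j < w' i ∧ r < w' j := by
  constructor
  · rintro ⟨i, j, l, hij, hjl, h1, h2⟩
    induction l using Fin.lastCases with
    | last =>
      obtain ⟨i, rfl⟩ := Fin.exists_castSucc_eq.2 (Fin.ne_last_of_lt (lt_trans hij hjl))
      obtain ⟨j, rfl⟩ := Fin.exists_castSucc_eq.2 (Fin.ne_last_of_lt hjl)
      rw [Fin.snoc_last] at h2
      simp only [Fin.snoc_castSucc] at h1 h2
      exact Or.inr ⟨i, j, by simpa using hij, h1, h2⟩
    | cast l =>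
      obtain ⟨i, rfl⟩ := Fin.exists_castSucc_eq.2 (Fin.ne_last_of_lt (lt_trans (lt_trans hij hjl) (Fin.castSucc_lt_last l)))
      obtain ⟨j, rfl⟩ := Fin.exists_castSucc_eq.2 (Fin.ne_last_of_lt (lt_trans hjl (Fin.castSucc_lt_last l)))
      simp only [Fin.snoc_castSucc] at h1 h2
      exact Or.inl ⟨i, j, l, by simpa using hij, by simpa using hjl, h1, h2⟩
  · rintro (⟨i, j, l, hij, hjl, h1, h2⟩ | ⟨i, j, hij, h1, h2⟩)
    · exact ⟨i.castSucc, j.castSucc, l.castSucc, by simpa using hij, by simpa using hjl,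
        by simpa using h1, by simpa using h2⟩
    · exact ⟨i.castSucc, j.castSucc, Fin.last m, by simpa using hij, Fin.castSucc_lt_last j,
        by simpa using h1, by simpa using h2⟩

lemma not_has231_snoc (hw' : Injective w') :
    ¬ Has231 (Fin.snoc w' r : Fin (m+1) → Fin n) ↔ ¬ Has231 w' ∧ Ok231 w' r := by
  rw [has231_snoc]
  push_neg
  constructor
  · rintro ⟨h1, h2⟩
    refine ⟨h1, fun i j hij hi hj => ?_⟩
    exact lt_of_le_of_ne (h2 i j hij hi) (fun e => absurd (hw' e) (ne_of_gt hij))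
  · rintro ⟨h1, h2⟩
    refine ⟨h1, fun i j hij hi => ?_⟩
    rcases le_or_gt (w' j) r with h | h
    · exact le_trans h (le_of_lt hi)
    · exact le_of_lt (h2 i j hij hi h)

lemma not_has321_snoc (hw' : Injective w') :
    ¬ Has321 (Fin.snoc w' r : Fin (m+1) → Fin n) ↔ ¬ Has321 w' ∧ Ok321 w' r := by
  rw [has321_snoc]
  push_neg
  constructor
  · rintro ⟨h1, h2⟩
    refine ⟨h1, fun i j hij hi hj => ?_⟩
    rcases lt_trichotomy (w' i) (w' j) with h | h | h
    · exact h
    · exact absurd (hw' h) (ne_of_lt hij)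
    · exact absurd hj (not_lt_of_ge (h2 i j hij h))
  · rintro ⟨h1, h2⟩
    refine ⟨h1, fun i j hij hlt => ?_⟩
    by_contra hc
    push_neg at hc
    exact absurd (h2 i j hij (lt_trans hc hlt) hc) (not_lt_of_gt hlt)

lemma ok231_snoc :
    Ok231 (Fin.snoc w' r : Fin (m+1) → Fin n) t ↔
      Ok231 w' t ∧ (t < r → ∀ i, t < w' i → r < w' i) := by
  constructor
  · intro h
    constructor
    · intro i j hij hi hj
      have := h i.castSucc j.castSucc (by simpa using hij) (by simpa using hi) (by simpa using hj)
      simpa using this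
    · intro htr i hi
      have := h i.castSucc (Fin.last m) (Fin.castSucc_lt_last i) (by simpa using hi)
        (by simpa using htr)
      simpa using this
  · rintro ⟨h1, h2⟩ i j hij hi hj
    induction j using Fin.lastCases with
    | last =>
      obtain ⟨i, rfl⟩ := Fin.exists_castSucc_eq.2 (Fin.ne_last_of_lt hij)
      rw [Fin.snoc_last] at hj ⊢
      rw [Fin.snoc_castSucc] at hi ⊢
      exact h2 hj i hi
    | cast j =>
      obtain ⟨i, rfl⟩ := Fin.exists_castSucc_eq.2 (Fin.ne_last_of_lt (lt_trans hij (Fin.castSucc_lt_last j)))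
      simp only [Fin.snoc_castSucc] at hi hj ⊢
      exact h1 i j (by simpa using hij) hi hj

lemma ok321_snoc :
    Ok321 (Fin.snoc w' r : Fin (m+1) → Fin n) t ↔
      Ok321 w' t ∧ (t < r → ∀ i, t < w' i → w' i < r) := by
  constructor
  · intro h
    constructor
    · intro i j hij hi hj
      have := h i.castSucc j.castSucc (by simpa using hij) (by simpa using hi) (by simpa using hj)
      simpa using this
    · intro htr i hi
      have := h i.castSucc (Fin.last m) (Fin.castSucc_lt_last i) (by simpa using hi)
        (by simpa using htr)
      simpa using this
  · rintro ⟨h1, h2⟩ i j hij hi hj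
    induction j using Fin.lastCases with
    | last =>
      obtain ⟨i, rfl⟩ := Fin.exists_castSucc_eq.2 (Fin.ne_last_of_lt hij)
      rw [Fin.snoc_last] at hj ⊢
      rw [Fin.snoc_castSucc] at hi ⊢
      exact h2 hj i hi
    | cast j =>
      obtain ⟨i, rfl⟩ := Fin.exists_castSucc_eq.2 (Fin.ne_last_of_lt (lt_trans hij (Fin.castSucc_lt_last j)))
      simp only [Fin.snoc_castSucc] at hi hj ⊢
      exact h1 i j (by simpa using hij) hi hj




end Trans

section Eqs
variable {m : ℕ} {r t : Fin n}

def snocEquiv (V : Finset (Fin n)) (r : Fin n) (hr : r ∈ V)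
    (Q : (Fin (m+1) → Fin n) → Prop) (Q' : (Fin m → Fin n) → Prop)
    (hQ : ∀ w' : Fin m → Fin n, Injective w' → Finset.univ.image w' = V.erase r →
      (Q (Fin.snoc w' r) ↔ Q' w')) :
    {w : Fin (m+1) → Fin n //
        ((Injective w ∧ Finset.univ.image w = V) ∧ w (Fin.last m) = r) ∧ Q w}
      ≃ {w' : Fin m → Fin n // (Injective w' ∧ Finset.univ.image w' = V.erase r) ∧ Q' w'} where
  toFun := fun x =>
    ⟨Fin.init x.1, ⟨init_inj x.2.1.1.1, init_image x.2.1.1.1 x.2.1.1.2 x.2.1.2⟩, by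
      have h : Fin.snoc (Fin.init x.1) r = x.1 := by
        have h0 := Fin.snoc_init_self x.1
        rw [x.2.1.2] at h0
        exact h0
      exact (hQ _ (init_inj x.2.1.1.1) (init_image x.2.1.1.1 x.2.1.1.2 x.2.1.2)).1
        (by rw [h]; exact x.2.2)⟩
  invFun := fun y =>
    ⟨Fin.snoc y.1 r, ⟨⟨snoc_inj y.2.1.1 (by rw [y.2.1.2]; exact notMem_erase r V),
       snoc_image hr y.2.1.2⟩, by simp⟩, (hQ _ y.2.1.1 y.2.1.2).2 y.2.2⟩
  left_inv := fun x => Subtype.ext (by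
    have h0 := Fin.snoc_init_self x.1
    rw [x.2.1.2] at h0
    exact h0)
  right_inv := fun y => Subtype.ext (by simp)

variable (hmem' : True)

def E231a (V : Finset (Fin n)) (hr : r ∈ V) (hrt : r ≤ t) :
    {w : Fin (m+1) → Fin n //
        ((Injective w ∧ Finset.univ.image w = V) ∧ w (Fin.last m) = r) ∧
          (¬ Has231 w ∧ Ok231 w t)}
      ≃ W231 m (V.erase r) r :=
  snocEquiv V r hr _ _ (fun w' hi _ => by
    rw [not_has231_snoc hi, ok231_snoc]
    constructor
    · rintro ⟨⟨h1, h2⟩, _, _⟩; exact ⟨h1, h2⟩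
    · rintro ⟨h1, h2⟩
      exact ⟨⟨h1, h2⟩, h2.mono hrt, fun htr => (not_lt.2 hrt htr).elim⟩)

def E321a (V : Finset (Fin n)) (hr : r ∈ V) (hrt : r ≤ t) :
    {w : Fin (m+1) → Fin n //
        ((Injective w ∧ Finset.univ.image w = V) ∧ w (Fin.last m) = r) ∧
          (¬ Has321 w ∧ Ok321 w t)}
      ≃ W321 m (V.erase r) r :=
  snocEquiv V r hr _ _ (fun w' hi _ => by
    rw [not_has321_snoc hi, ok321_snoc]
    constructor
    · rintro ⟨⟨h1, h2⟩, _, _⟩; exact ⟨h1, h2⟩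
    · rintro ⟨h1, h2⟩
      exact ⟨⟨h1, h2⟩, h2.mono hrt, fun htr => (not_lt.2 hrt htr).elim⟩)

def E321c (V : Finset (Fin n)) (hr : r ∈ V) (htr : t < r) (hmax : ∀ v ∈ V, v ≤ r) :
    {w : Fin (m+1) → Fin n //
        ((Injective w ∧ Finset.univ.image w = V) ∧ w (Fin.last m) = r) ∧
          (¬ Has321 w ∧ Ok321 w t)}
      ≃ W321 m (V.erase r) t :=
  snocEquiv V r hr _ _ (fun w' hi hv => by
    rw [not_has321_snoc hi, ok321_snoc]
    have hmem : ∀ i, w' i ∈ V.erase r := fun i => by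
      rw [← hv]; exact mem_image_of_mem w' (mem_univ i)
    constructor
    · rintro ⟨⟨h1, _⟩, h2, _⟩; exact ⟨h1, h2⟩
    · rintro ⟨h1, h2⟩
      refine ⟨⟨h1, h2.mono (le_of_lt htr)⟩, h2, fun _ i _ => ?_⟩
      exact lt_of_le_of_ne (hmax _ (mem_of_mem_erase (hmem i))) (ne_of_mem_erase (hmem i)))

def E231c (V : Finset (Fin n)) (hr : r ∈ V) (htr : t < r) (hmin : ∀ v ∈ V, t < v → r ≤ v) :
    {w : Fin (m+1) → Fin n //
        ((Injective w ∧ Finset.univ.image w = V) ∧ w (Fin.last m) = r) ∧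
          (¬ Has231 w ∧ Ok231 w t)}
      ≃ W231 m (V.erase r) t :=
  snocEquiv V r hr _ _ (fun w' hi hv => by
    rw [not_has231_snoc hi, ok231_snoc]
    have hmem : ∀ i, w' i ∈ V.erase r := fun i => by
      rw [← hv]; exact mem_image_of_mem w' (mem_univ i)
    constructor
    · rintro ⟨⟨h1, _⟩, h2, _⟩; exact ⟨h1, h2⟩
    · rintro ⟨h1, h2⟩
      refine ⟨⟨h1, h2.mono (le_of_lt htr)⟩, h2, fun _ i hti => ?_⟩
      exact lt_of_le_of_ne (hmin _ (mem_of_mem_erase (hmem i)) hti)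
        (Ne.symm (ne_of_mem_erase (hmem i))))

lemma empty321 (V : Finset (Fin n)) (htr : t < r) (hv : ∃ v ∈ V, r < v) :
    IsEmpty {w : Fin (m+1) → Fin n //
        ((Injective w ∧ Finset.univ.image w = V) ∧ w (Fin.last m) = r) ∧
          (¬ Has321 w ∧ Ok321 w t)} := by
  constructor
  rintro ⟨w, ⟨⟨hi, hV⟩, hl⟩, _, hok⟩
  obtain ⟨v, hvV, hrv⟩ := hv
  rw [← hV] at hvV
  simp only [mem_image, mem_univ, true_and] at hvV
  obtain ⟨i, rfl⟩ := hvV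
  have hne : i ≠ Fin.last m := fun h => by rw [h, hl] at hrv; exact lt_irrefl _ hrv
  have := hok i (Fin.last m) (Fin.lt_last_iff_ne_last.2 hne)
    (lt_trans htr hrv) (by rw [hl]; exact htr)
  rw [hl] at this
  exact absurd this (not_lt.2 (le_of_lt hrv))

lemma empty231 (V : Finset (Fin n)) (htr : t < r) (hv : ∃ v ∈ V, t < v ∧ v < r) :
    IsEmpty {w : Fin (m+1) → Fin n //
        ((Injective w ∧ Finset.univ.image w = V) ∧ w (Fin.last m) = r) ∧
          (¬ Has231 w ∧ Ok231 w t)} := by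
  constructor
  rintro ⟨w, ⟨⟨hi, hV⟩, hl⟩, _, hok⟩
  obtain ⟨v, hvV, htv, hvr⟩ := hv
  rw [← hV] at hvV
  simp only [mem_image, mem_univ, true_and] at hvV
  obtain ⟨i, rfl⟩ := hvV
  have hne : i ≠ Fin.last m := fun h => by rw [h, hl] at hvr; exact lt_irrefl _ hvr
  have := hok i (Fin.last m) (Fin.lt_last_iff_ne_last.2 hne) htv (by rw [hl]; exact htr)
  rw [hl] at this
  exact absurd this (not_lt.2 (le_of_lt hvr))

lemma card_sigma' {ι : Type*} [Fintype ι] (f : ι → Type*) [∀ i, Finite (f i)] :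
    Nat.card (Σ i, f i) = ∑ i, Nat.card (f i) := by
  letI : ∀ i, Fintype (f i) := fun i => Fintype.ofFinite _
  simp [Nat.card_eq_fintype_card, Fintype.card_sigma]

lemma card_part (V : Finset (Fin n)) (Q : (Fin (m+1) → Fin n) → Prop) :
    Nat.card {w : Fin (m+1) → Fin n // (Injective w ∧ Finset.univ.image w = V) ∧ Q w}
      = ∑ r ∈ V, Nat.card {w : Fin (m+1) → Fin n //
          ((Injective w ∧ Finset.univ.image w = V) ∧ w (Fin.last m) = r) ∧ Q w} := by
  have e : {w : Fin (m+1) → Fin n // (Injective w ∧ Finset.univ.image w = V) ∧ Q w}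
      ≃ Σ r : {x // x ∈ V}, {w : Fin (m+1) → Fin n //
          ((Injective w ∧ Finset.univ.image w = V) ∧ w (Fin.last m) = ↑r) ∧ Q w} :=
    { toFun := fun x => ⟨⟨x.1 (Fin.last m),
        (Finset.ext_iff.1 x.2.1.2 _).1 (mem_image_of_mem _ (mem_univ _))⟩,
        ⟨x.1, ⟨x.2.1, rfl⟩, x.2.2⟩⟩
      invFun := fun y => ⟨y.2.1, y.2.2.1.1, y.2.2.2⟩
      left_inv := fun x => rfl
      right_inv := by
        rintro ⟨⟨r, hr⟩, ⟨w, ⟨hw, hl⟩, hq⟩⟩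
        have h2 : w (Fin.last m) = r := hl
        subst h2
        rfl }
  rw [Nat.card_congr e, card_sigma']
  exact Finset.sum_coe_sort V (fun r => Nat.card {w : Fin (m+1) → Fin n //
    ((Injective w ∧ Finset.univ.image w = V) ∧ w (Fin.last m) = r) ∧ Q w})

lemma sum321 (m : ℕ) (V : Finset (Fin n)) (t : Fin n) :
    Nat.card (W321 (n := n) (m+1) V t)
      = ∑ r ∈ V.filter (fun v => v ≤ t), Nat.card (W321 (n := n) m (V.erase r) r)
        + if hne : (V.filter (fun v => t < v)).Nonempty
          then Nat.card (W321 (n := n) m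
            (V.erase (V.max' (hne.mono (filter_subset _ _)))) t)
          else 0 := by
  rw [card_part V (fun w => ¬ Has321 w ∧ Ok321 w t)]
  rw [← Finset.sum_filter_add_sum_filter_not V (fun v => v ≤ t)]
  congr 1
  · exact Finset.sum_congr rfl fun r hr =>
      Nat.card_congr (E321a V (mem_filter.1 hr).1 (mem_filter.1 hr).2)
  · have hfil : V.filter (fun v => ¬ v ≤ t) = V.filter (fun v => t < v) :=
      filter_congr (fun x _ => not_le)
    rw [hfil]
    by_cases hne : (V.filter (fun v => t < v)).Nonempty
    · rw [dif_pos hne]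
      have hVne : V.Nonempty := hne.mono (filter_subset _ _)
      obtain ⟨v0, hv0⟩ := hne
      have hv0' := mem_filter.1 hv0
      have htM : t < V.max' hVne := lt_of_lt_of_le hv0'.2 (le_max' V v0 hv0'.1)
      rw [Finset.sum_eq_single_of_mem (V.max' hVne)
        (mem_filter.2 ⟨max'_mem V hVne, htM⟩)
        (fun b hb hbM => Nat.card_eq_zero.2 (Or.inl (empty321 V (mem_filter.1 hb).2
          ⟨V.max' hVne, max'_mem V hVne, lt_of_le_of_ne (le_max' V b (mem_filter.1 hb).1) hbM⟩)))]
      exact Nat.card_congr (E321c V (max'_mem V hVne) htM (fun v hv => le_max' V v hv))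
    · rw [dif_neg hne, not_nonempty_iff_eq_empty.1 hne, Finset.sum_empty]

lemma sum231 (m : ℕ) (V : Finset (Fin n)) (t : Fin n) :
    Nat.card (W231 (n := n) (m+1) V t)
      = ∑ r ∈ V.filter (fun v => v ≤ t), Nat.card (W231 (n := n) m (V.erase r) r)
        + if hne : (V.filter (fun v => t < v)).Nonempty
          then Nat.card (W231 (n := n) m
            (V.erase ((V.filter (fun v => t < v)).min' hne)) t)
          else 0 := by
  rw [card_part V (fun w => ¬ Has231 w ∧ Ok231 w t)]
  rw [← Finset.sum_filter_add_sum_filter_not V (fun v => v ≤ t)]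
  congr 1
  · exact Finset.sum_congr rfl fun r hr =>
      Nat.card_congr (E231a V (mem_filter.1 hr).1 (mem_filter.1 hr).2)
  · have hfil : V.filter (fun v => ¬ v ≤ t) = V.filter (fun v => t < v) :=
      filter_congr (fun x _ => not_le)
    rw [hfil]
    by_cases hne : (V.filter (fun v => t < v)).Nonempty
    · rw [dif_pos hne]
      set M := (V.filter (fun v => t < v)).min' hne with hM
      have hMf := mem_filter.1 ((V.filter (fun v => t < v)).min'_mem hne)
      rw [Finset.sum_eq_single_of_mem M (mem_filter.2 hMf)
        (fun b hb hbM => Nat.card_eq_zero.2 (Or.inl (empty231 V (mem_filter.1 hb).2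
          ⟨M, hMf.1, hMf.2, lt_of_le_of_ne (min'_le _ b hb) (Ne.symm hbM)⟩)))]
      exact Nat.card_congr (E231c V hMf.1 hMf.2
        (fun v hv htv => min'_le _ v (mem_filter.2 ⟨hv, htv⟩)))
    · rw [dif_neg hne, not_nonempty_iff_eq_empty.1 hne, Finset.sum_empty]

lemma rank_orderIso (s : Finset (Fin n)) {c : ℕ} (h : s.card = c) (i : Fin c) :
    (s.filter (fun x => x ≤ (s.orderIsoOfFin h i : Fin n))).card = (i : ℕ) + 1 := by
  set e := s.orderIsoOfFin h with he
  have himg : s.filter (fun x => x ≤ (e i : Fin n))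
      = (Finset.Iic i).image (fun j => (e j : Fin n)) := by
    ext x
    simp only [mem_filter, mem_image, mem_Iic]
    constructor
    · rintro ⟨hx, hle⟩
      refine ⟨e.symm ⟨x, hx⟩, ?_, by simp⟩
      rw [← e.le_iff_le, OrderIso.apply_symm_apply]
      exact hle
    · rintro ⟨j, hji, rfl⟩
      exact ⟨(e j).2, by exact_mod_cast e.le_iff_le.2 hji⟩
  rw [himg, Finset.card_image_of_injective _
    (fun a b hab => e.injective (Subtype.ext hab)), Fin.card_Iic]

lemma card_filter_le_sub (V : Finset (Fin n)) (t : Fin n) :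
    (V.filter (fun v => t < v)).card = V.card - (V.filter (fun v => v ≤ t)).card := by
  have h := Finset.card_filter_add_card_filter_not (s := V) (fun v => v ≤ t)
  have hfil : V.filter (fun v => ¬ v ≤ t) = V.filter (fun v => t < v) :=
    filter_congr (fun x _ => not_le)
  rw [hfil] at h
  omega


lemma filter_le_eq (V : Finset (Fin n)) (t r : Fin n) (hrt : r ≤ t) :
    (V.filter (fun v => v ≤ t)).filter (fun v => v ≤ r) = V.filter (fun v => v ≤ r) := by
  rw [Finset.filter_filter]
  exact filter_congr (fun x _ => ⟨fun h => h.2, fun h => ⟨le_trans h hrt, h⟩⟩)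

lemma rank_orderIso' (V : Finset (Fin n)) (t : Fin n) {c : ℕ}
    (h : (V.filter (fun v => v ≤ t)).card = c) (i : Fin c) :
    ((V.erase ↑((V.filter (fun v => v ≤ t)).orderIsoOfFin h i)).filter
      (fun v => v ≤ ↑((V.filter (fun v => v ≤ t)).orderIsoOfFin h i))).card = (i : ℕ) := by
  have hr : (↑((V.filter (fun v => v ≤ t)).orderIsoOfFin h i) : Fin n)
      ∈ V.filter (fun v => v ≤ t) := ((V.filter (fun v => v ≤ t)).orderIsoOfFin h i).2
  have hle := (mem_filter.1 hr).2
  have hmem : (↑((V.filter (fun v => v ≤ t)).orderIsoOfFin h i) : Fin n)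
      ∈ (V.filter (fun v => v ≤ t)).filter
        (fun v => v ≤ ↑((V.filter (fun v => v ≤ t)).orderIsoOfFin h i)) :=
    mem_filter.2 ⟨hr, le_refl _⟩
  have key := rank_orderIso (V.filter (fun v => v ≤ t)) h i
  rw [Finset.filter_erase, ← filter_le_eq V t _ hle, card_erase_of_mem hmem, key]
  simp

theorem key : ∀ (m : ℕ) (V V' : Finset (Fin n)) (t t' : Fin n),
    V.card = V'.card →
    (V.filter (fun v => v ≤ t)).card = (V'.filter (fun v => v ≤ t')).card →
    Nat.card (W231 (n := n) m V t) = Nat.card (W321 (n := n) m V' t') := by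
  intro m
  induction m with
  | zero =>
    intro V V' t t' h1 h2
    by_cases hV : V = ∅
    · have hV' : V' = ∅ := card_eq_zero.1 (h1 ▸ (by rw [hV, card_empty]) : V'.card = 0)
      have u1 : Nat.card (W231 (n := n) 0 V t) = 1 := by
        subst hV
        haveI : Unique (W231 (n := n) 0 ∅ t) :=
          { default := ⟨Fin.elim0, ⟨fun x => x.elim0, by simp⟩,
              fun ⟨i, _, _, _⟩ => i.elim0, fun i => i.elim0⟩
            uniq := fun x => Subtype.ext (funext fun i => i.elim0) }
        exact Nat.card_unique
      have u2 : Nat.card (W321 (n := n) 0 V' t') = 1 := by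
        subst hV'
        haveI : Unique (W321 (n := n) 0 ∅ t') :=
          { default := ⟨Fin.elim0, ⟨fun x => x.elim0, by simp⟩,
              fun ⟨i, _, _, _⟩ => i.elim0, fun i => i.elim0⟩
            uniq := fun x => Subtype.ext (funext fun i => i.elim0) }
        exact Nat.card_unique
      rw [u1, u2]
    · have hV' : V' ≠ ∅ := fun h => hV (card_eq_zero.1 (h1.symm ▸ (by rw [h, card_empty]) : V.card = 0))
      have e1 : IsEmpty (W231 (n := n) 0 V t) := by
        constructor
        rintro ⟨w, ⟨_, himg⟩, _⟩
        exact hV (by simpa using himg.symm)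
      have e2 : IsEmpty (W321 (n := n) 0 V' t') := by
        constructor
        rintro ⟨w, ⟨_, himg⟩, _⟩
        exact hV' (by simpa using himg.symm)
      rw [Nat.card_eq_zero.2 (Or.inl e1), Nat.card_eq_zero.2 (Or.inl e2)]
  | succ m ih =>
    intro V V' t t' h1 h2
    rw [sum231, sum321]
    have hc : (V'.filter (fun v => v ≤ t')).card = (V.filter (fun v => v ≤ t)).card := h2.symm
    congr 1
    · rw [← Finset.sum_coe_sort (V.filter (fun v => v ≤ t)),
        ← Finset.sum_coe_sort (V'.filter (fun v => v ≤ t'))]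
      rw [← Fintype.sum_equiv ((V.filter (fun v => v ≤ t)).orderIsoOfFin rfl).toEquiv
        (fun i => Nat.card (W231 (n := n) m
          (V.erase ↑((V.filter (fun v => v ≤ t)).orderIsoOfFin rfl i))
          ↑((V.filter (fun v => v ≤ t)).orderIsoOfFin rfl i)))
        (fun x => Nat.card (W231 (n := n) m (V.erase ↑x) ↑x)) (fun i => rfl)]
      rw [← Fintype.sum_equiv ((V'.filter (fun v => v ≤ t')).orderIsoOfFin hc).toEquiv
        (fun i => Nat.card (W321 (n := n) m
          (V'.erase ↑((V'.filter (fun v => v ≤ t')).orderIsoOfFin hc i))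
          ↑((V'.filter (fun v => v ≤ t')).orderIsoOfFin hc i)))
        (fun x => Nat.card (W321 (n := n) m (V'.erase ↑x) ↑x)) (fun i => rfl)]
      apply Finset.sum_congr rfl
      intro i _
      have hr1 : (↑((V.filter (fun v => v ≤ t)).orderIsoOfFin rfl i) : Fin n)
          ∈ V.filter (fun v => v ≤ t) := ((V.filter (fun v => v ≤ t)).orderIsoOfFin rfl i).2
      have hr2 : (↑((V'.filter (fun v => v ≤ t')).orderIsoOfFin hc i) : Fin n)
          ∈ V'.filter (fun v => v ≤ t') := ((V'.filter (fun v => v ≤ t')).orderIsoOfFin hc i).2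
      have hm1 := mem_filter.1 hr1
      have hm2 := mem_filter.1 hr2
      apply ih
      · rw [card_erase_of_mem hm1.1, card_erase_of_mem hm2.1, h1]
      · rw [rank_orderIso' V t rfl i, rank_orderIso' V' t' hc i]
    · have hiff : (V.filter (fun v => t < v)).Nonempty ↔ (V'.filter (fun v => t' < v)).Nonempty := by
        rw [← Finset.card_pos, ← Finset.card_pos, card_filter_le_sub, card_filter_le_sub, h1, h2]
      by_cases hne : (V.filter (fun v => t < v)).Nonempty
      · have hne' := hiff.1 hne
        rw [dif_pos hne, dif_pos hne']
        have hMf := mem_filter.1 ((V.filter (fun v => t < v)).min'_mem hne)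
        have hM'V : V'.max' (hne'.mono (filter_subset _ _)) ∈ V' := max'_mem _ _
        have htM' : t' < V'.max' (hne'.mono (filter_subset _ _)) := by
          obtain ⟨v0, hv0⟩ := hne'
          have h0 := mem_filter.1 hv0
          exact lt_of_lt_of_le h0.2 (le_max' V' v0 h0.1)
        apply ih
        · rw [card_erase_of_mem hMf.1, card_erase_of_mem hM'V, h1]
        · have hnm1 : (V.filter (fun v => t < v)).min' hne ∉ V.filter (fun v => v ≤ t) :=
            fun hcm => not_lt.2 (mem_filter.1 hcm).2 hMf.2
          have hnm2 : V'.max' (hne'.mono (filter_subset _ _)) ∉ V'.filter (fun v => v ≤ t') :=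
            fun hcm => not_lt.2 (mem_filter.1 hcm).2 htM'
          rw [Finset.filter_erase, Finset.filter_erase, Finset.erase_eq_self.2 hnm1,
            Finset.erase_eq_self.2 hnm2]
          exact h2
      · rw [dif_neg hne, dif_neg (fun h => hne (hiff.2 h))]

end Eqs

section Fibers
variable {m : ℕ} {r t : Fin n}

lemma sum_ite231 (V : Finset (Fin n)) (b : ℕ) (hV : V.Nonempty) :
    Nat.card {w : Fin (m+1) → Fin n // (Injective w ∧ Finset.univ.image w = V) ∧
        (¬ Has231 w ∧ Ok231 w (V.max' hV) ∧ ((w (Fin.last m) : Fin n) : ℕ) < b)}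
      = ∑ r ∈ V, if ((r : Fin n) : ℕ) < b then Nat.card (W231 (n := n) m (V.erase r) r) else 0 := by
  rw [card_part V (fun w => ¬ Has231 w ∧ Ok231 w (V.max' hV) ∧ ((w (Fin.last m) : Fin n) : ℕ) < b)]
  apply Finset.sum_congr rfl
  intro r hr
  by_cases hrb : ((r : Fin n) : ℕ) < b
  · rw [if_pos hrb]
    refine Nat.card_congr (Equiv.trans (Equiv.subtypeEquivRight fun w => ?_)
      (E231a V hr (le_max' V r hr)))
    constructor
    · rintro ⟨hb, h1, h2, _⟩
      exact ⟨hb, h1, h2⟩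
    · rintro ⟨hb, h1, h2⟩
      exact ⟨hb, h1, h2, by rw [hb.2]; exact hrb⟩
  · rw [if_neg hrb]
    refine Nat.card_eq_zero.2 (Or.inl ⟨?_⟩)
    rintro ⟨w, ⟨_, hl⟩, _, _, hlt⟩
    rw [hl] at hlt
    exact hrb hlt

lemma sum_ite321 (V : Finset (Fin n)) (b : ℕ) (hV : V.Nonempty) :
    Nat.card {w : Fin (m+1) → Fin n // (Injective w ∧ Finset.univ.image w = V) ∧
        (¬ Has321 w ∧ Ok321 w (V.max' hV) ∧ ((w (Fin.last m) : Fin n) : ℕ) < b)}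
      = ∑ r ∈ V, if ((r : Fin n) : ℕ) < b then Nat.card (W321 (n := n) m (V.erase r) r) else 0 := by
  rw [card_part V (fun w => ¬ Has321 w ∧ Ok321 w (V.max' hV) ∧ ((w (Fin.last m) : Fin n) : ℕ) < b)]
  apply Finset.sum_congr rfl
  intro r hr
  by_cases hrb : ((r : Fin n) : ℕ) < b
  · rw [if_pos hrb]
    refine Nat.card_congr (Equiv.trans (Equiv.subtypeEquivRight fun w => ?_)
      (E321a V hr (le_max' V r hr)))
    constructor
    · rintro ⟨hb, h1, h2, _⟩
      exact ⟨hb, h1, h2⟩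
    · rintro ⟨hb, h1, h2⟩
      exact ⟨hb, h1, h2, by rw [hb.2]; exact hrb⟩
  · rw [if_neg hrb]
    refine Nat.card_eq_zero.2 (Or.inl ⟨?_⟩)
    rintro ⟨w, ⟨_, hl⟩, _, _, hlt⟩
    rw [hl] at hlt
    exact hrb hlt

lemma fiber_eq (m : ℕ) (V : Finset (Fin n)) (b : ℕ) :
    Nat.card {w : Fin m → Fin n // (Injective w ∧ Finset.univ.image w = V) ∧
        (¬ Has231 w ∧ ∀ h : 0 < m, ((w ⟨m - 1, Nat.sub_lt h Nat.one_pos⟩ : Fin n) : ℕ) < b)}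
      = Nat.card {w : Fin m → Fin n // (Injective w ∧ Finset.univ.image w = V) ∧
        (¬ Has321 w ∧ ∀ h : 0 < m, ((w ⟨m - 1, Nat.sub_lt h Nat.one_pos⟩ : Fin n) : ℕ) < b)} := by
  cases m with
  | zero =>
    apply Nat.card_congr (Equiv.subtypeEquivRight _)
    intro w
    have h231 : ¬ Has231 w := fun h => by obtain ⟨i, -⟩ := h; exact i.elim0
    have h321 : ¬ Has321 w := fun h => by obtain ⟨i, -⟩ := h; exact i.elim0
    constructor
    · rintro ⟨hb, -, h2⟩
      exact ⟨hb, h321, h2⟩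
    · rintro ⟨hb, -, h2⟩
      exact ⟨hb, h231, h2⟩
  | succ m =>
    by_cases hV : V.Nonempty
    · have hOk231 : ∀ w : Fin (m+1) → Fin n, Finset.univ.image w = V →
          Ok231 w (V.max' hV) := by
        intro w himg i j _ hi _
        exact absurd hi (not_lt.2 (le_max' V _
          ((Finset.ext_iff.1 himg _).1 (mem_image_of_mem w (mem_univ i)))))
      have hOk321 : ∀ w : Fin (m+1) → Fin n, Finset.univ.image w = V →
          Ok321 w (V.max' hV) := by
        intro w himg i j _ hi _
        exact absurd hi (not_lt.2 (le_max' V _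
          ((Finset.ext_iff.1 himg _).1 (mem_image_of_mem w (mem_univ i)))))
      have hlast : ∀ w : Fin (m+1) → Fin n,
          (∀ h : 0 < m + 1, ((w ⟨m + 1 - 1, Nat.sub_lt h Nat.one_pos⟩ : Fin n) : ℕ) < b)
            ↔ ((w (Fin.last m) : Fin n) : ℕ) < b := by
        intro w
        constructor
        · intro h
          exact h (Nat.succ_pos m)
        · intro h _
          exact h
      have e1 : {w : Fin (m+1) → Fin n // (Injective w ∧ Finset.univ.image w = V) ∧
            (¬ Has231 w ∧ ∀ h : 0 < m + 1,
              ((w ⟨m + 1 - 1, Nat.sub_lt h Nat.one_pos⟩ : Fin n) : ℕ) < b)}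
          ≃ {w : Fin (m+1) → Fin n // (Injective w ∧ Finset.univ.image w = V) ∧
            (¬ Has231 w ∧ Ok231 w (V.max' hV) ∧ ((w (Fin.last m) : Fin n) : ℕ) < b)} := by
        apply Equiv.subtypeEquivRight
        intro w
        constructor
        · rintro ⟨hb, h1, h2⟩
          exact ⟨hb, h1, hOk231 w hb.2, (hlast w).1 h2⟩
        · rintro ⟨hb, h1, -, h2⟩
          exact ⟨hb, h1, (hlast w).2 h2⟩
      have e2 : {w : Fin (m+1) → Fin n // (Injective w ∧ Finset.univ.image w = V) ∧
            (¬ Has321 w ∧ ∀ h : 0 < m + 1,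
              ((w ⟨m + 1 - 1, Nat.sub_lt h Nat.one_pos⟩ : Fin n) : ℕ) < b)}
          ≃ {w : Fin (m+1) → Fin n // (Injective w ∧ Finset.univ.image w = V) ∧
            (¬ Has321 w ∧ Ok321 w (V.max' hV) ∧ ((w (Fin.last m) : Fin n) : ℕ) < b)} := by
        apply Equiv.subtypeEquivRight
        intro w
        constructor
        · rintro ⟨hb, h1, h2⟩
          exact ⟨hb, h1, hOk321 w hb.2, (hlast w).1 h2⟩
        · rintro ⟨hb, h1, -, h2⟩
          exact ⟨hb, h1, (hlast w).2 h2⟩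
      rw [Nat.card_congr e1, Nat.card_congr e2, sum_ite231 V b hV, sum_ite321 V b hV]
      apply Finset.sum_congr rfl
      intro r _
      by_cases hrb : ((r : Fin n) : ℕ) < b
      · rw [if_pos hrb, if_pos hrb]
        exact key m (V.erase r) (V.erase r) r r rfl rfl
      · rw [if_neg hrb, if_neg hrb]
    · have hVe := not_nonempty_iff_eq_empty.1 hV
      have he : ∀ (P : (Fin (m+1) → Fin n) → Prop),
          IsEmpty {w : Fin (m+1) → Fin n //
            (Injective w ∧ Finset.univ.image w = V) ∧ P w} := by
        intro P
        constructor
        rintro ⟨w, ⟨-, himg⟩, -⟩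
        have : w 0 ∈ Finset.univ.image w := mem_image_of_mem w (mem_univ 0)
        rw [himg, hVe] at this
        exact absurd this (notMem_empty _)
      rw [Nat.card_eq_zero.2 (Or.inl (he _)), Nat.card_eq_zero.2 (Or.inl (he _))]

end Fibers

lemma sm3 {α : Type*} [Preorder α] (A B C : α) (h1 : A < B) (h2 : B < C) :
    StrictMono (![A,B,C] : Fin 3 → α) := by
  intro a b hab
  match a, b with
  | ⟨0,_⟩, ⟨1,_⟩ => exact h1
  | ⟨0,_⟩, ⟨2,_⟩ => exact lt_trans h1 h2
  | ⟨1,_⟩, ⟨2,_⟩ => exact h2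
  | ⟨0,_⟩, ⟨0,_⟩ => exact absurd hab (by simp [Fin.lt_def])
  | ⟨1,_⟩, ⟨1,_⟩ => exact absurd hab (by simp [Fin.lt_def])
  | ⟨2,_⟩, ⟨2,_⟩ => exact absurd hab (by simp [Fin.lt_def])
  | ⟨1,_⟩, ⟨0,_⟩ => exact absurd hab (by simp [Fin.lt_def])
  | ⟨2,_⟩, ⟨0,_⟩ => exact absurd hab (by simp [Fin.lt_def])
  | ⟨2,_⟩, ⟨1,_⟩ => exact absurd hab (by simp [Fin.lt_def])

lemma sm2 {α : Type*} [Preorder α] (A B : α) (h1 : A < B) :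
    StrictMono (![A,B] : Fin 2 → α) := by
  intro a b hab
  match a, b with
  | ⟨0,_⟩, ⟨1,_⟩ => exact h1
  | ⟨0,_⟩, ⟨0,_⟩ => exact absurd hab (by simp [Fin.lt_def])
  | ⟨1,_⟩, ⟨1,_⟩ => exact absurd hab (by simp [Fin.lt_def])
  | ⟨1,_⟩, ⟨0,_⟩ => exact absurd hab (by simp [Fin.lt_def])

def DecP (σ : Equiv.Perm (Fin n)) (k : ℕ) : Prop :=
  ∀ i j : Fin n, k ≤ (i : ℕ) → i < j → σ j < σ i

lemma dec_n (σ : Equiv.Perm (Fin n)) : DecP σ n :=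
  fun i _ hi _ => absurd i.isLt (not_lt.2 hi)

noncomputable def k0 (σ : Equiv.Perm (Fin n)) : ℕ := sInf {k | DecP σ k}

lemma k0_mem (σ : Equiv.Perm (Fin n)) : DecP σ (k0 σ) :=
  Nat.sInf_mem (⟨n, show DecP σ n from dec_n σ⟩ : {k | DecP σ k}.Nonempty)

lemma k0_le {σ : Equiv.Perm (Fin n)} {k : ℕ} (h : DecP σ k) : k0 σ ≤ k :=
  Nat.sInf_le (show k ∈ {k | DecP σ k} from h)

lemma k0_le_n (σ : Equiv.Perm (Fin n)) : k0 σ ≤ n := k0_le (dec_n σ)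

lemma dec_mono {σ : Equiv.Perm (Fin n)} {k k' : ℕ} (h : DecP σ k) (hk : k ≤ k') : DecP σ k' :=
  fun i j hi hij => h i j (le_trans hk hi) hij

lemma k0_or (σ : Equiv.Perm (Fin n)) : k0 σ = 0 ∨ k0 σ < n := by
  rcases Nat.eq_zero_or_pos n with hn | hn
  · left
    have : DecP σ 0 := fun i => by subst hn; exact i.elim0
    have := k0_le this
    omega
  · right
    have : DecP σ (n - 1) := fun i j hi hij => by
      have := j.isLt
      have := Fin.lt_def.1 hij
      omega
    have := k0_le this
    omega

lemma k0_min {σ : Equiv.Perm (Fin n)} (h : 0 < k0 σ) : ¬ DecP σ (k0 σ - 1) :=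
  fun hD => absurd (k0_le hD) (by omega)

noncomputable def prefFn (σ : Equiv.Perm (Fin n)) : Fin (k0 σ) → Fin n :=
  fun i => σ (Fin.castLE (k0_le_n σ) i)

lemma containsIn_mono {m : ℕ} {σ : Equiv.Perm (Fin n)} {π : Equiv.Perm (Fin m)}
    {S T : Set (Fin n)} (h : ContainsIn σ π S) (hST : S ⊆ T) : ContainsIn σ π T := by
  obtain ⟨f, h1, h2, h3⟩ := h
  exact ⟨f, h1, fun s => hST (h2 s), h3⟩

lemma dec_iff (σ : Equiv.Perm (Fin n)) (k : ℕ) :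
    ¬ ContainsIn σ p12 {i : Fin n | k ≤ (i : ℕ)} ↔ DecP σ k := by
  constructor
  · intro h i j hi hij
    rcases lt_trichotomy (σ j) (σ i) with hlt | heq | hgt
    · exact hlt
    · exact absurd (σ.injective heq) (ne_of_gt hij)
    · exfalso
      apply h
      refine ⟨![i, j], ?_, ?_, ?_⟩
      · exact sm2 _ _ hij
      · intro s
        fin_cases s
        · exact hi
        · exact le_trans hi (le_of_lt (Fin.lt_def.1 hij))
      · intro s t
        fin_cases s <;> fin_cases t
        · exact iff_of_false (lt_irrefl _) (by decide)
        · exact iff_of_true hgt (by decide)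
        · exact iff_of_false (not_lt.2 (le_of_lt hgt)) (by decide)
        · exact iff_of_false (lt_irrefl _) (by decide)
  · rintro hd ⟨f, hmono, hmem, hval⟩
    have h01 : f 0 < f 1 := hmono (by decide : (0 : Fin 2) < 1)
    have := (hval 0 1).2 (by decide : p12 0 < p12 1)
    exact absurd this (not_lt.2 (le_of_lt (hd (f 0) (f 1) (hmem 0) h01)))

lemma has231_iff (σ : Equiv.Perm (Fin n)) (k : ℕ) (hk : k ≤ n) :
    ContainsIn σ p231 {i : Fin n | (i : ℕ) < k}
      ↔ Has231 (fun i : Fin k => σ (Fin.castLE hk i)) := by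
  constructor
  · rintro ⟨f, hmono, hmem, hval⟩
    refine ⟨⟨f 0, hmem 0⟩, ⟨f 1, hmem 1⟩, ⟨f 2, hmem 2⟩, ?_, ?_, ?_, ?_⟩
    · exact hmono (by decide : (0 : Fin 3) < 1)
    · exact hmono (by decide : (1 : Fin 3) < 2)
    · exact (hval 2 0).2 (by decide)
    · exact (hval 0 1).2 (by decide)
  · rintro ⟨i, j, l, hij, hjl, h1, h2⟩
    refine ⟨![Fin.castLE hk i, Fin.castLE hk j, Fin.castLE hk l], ?_, ?_, ?_⟩
    · exact sm3 _ _ _ (by exact hij) (by exact hjl)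
    · intro s
      fin_cases s
      · exact i.isLt
      · exact j.isLt
      · exact l.isLt
    · intro s t
      fin_cases s <;> fin_cases t
      · exact iff_of_false (lt_irrefl _) (by decide)
      · exact iff_of_true h2 (by decide)
      · exact iff_of_false (not_lt.2 (le_of_lt h1)) (by decide)
      · exact iff_of_false (not_lt.2 (le_of_lt h2)) (by decide)
      · exact iff_of_false (lt_irrefl _) (by decide)
      · exact iff_of_false (not_lt.2 (le_of_lt (lt_trans h1 h2))) (by decide)
      · exact iff_of_true h1 (by decide)
      · exact iff_of_true (lt_trans h1 h2) (by decide)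
      · exact iff_of_false (lt_irrefl _) (by decide)

lemma has321_iff (σ : Equiv.Perm (Fin n)) (k : ℕ) (hk : k ≤ n) :
    ContainsIn σ p321 {i : Fin n | (i : ℕ) < k}
      ↔ Has321 (fun i : Fin k => σ (Fin.castLE hk i)) := by
  constructor
  · rintro ⟨f, hmono, hmem, hval⟩
    refine ⟨⟨f 0, hmem 0⟩, ⟨f 1, hmem 1⟩, ⟨f 2, hmem 2⟩, ?_, ?_, ?_, ?_⟩
    · exact hmono (by decide : (0 : Fin 3) < 1)
    · exact hmono (by decide : (1 : Fin 3) < 2)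
    · exact (hval 1 0).2 (by decide)
    · exact (hval 2 1).2 (by decide)
  · rintro ⟨i, j, l, hij, hjl, h1, h2⟩
    refine ⟨![Fin.castLE hk i, Fin.castLE hk j, Fin.castLE hk l], ?_, ?_, ?_⟩
    · exact sm3 _ _ _ (by exact hij) (by exact hjl)
    · intro s
      fin_cases s
      · exact i.isLt
      · exact j.isLt
      · exact l.isLt
    · intro s t
      fin_cases s <;> fin_cases t
      · exact iff_of_false (lt_irrefl _) (by decide)
      · exact iff_of_false (not_lt.2 (le_of_lt h1)) (by decide)
      · exact iff_of_false (not_lt.2 (le_of_lt (lt_trans h2 h1))) (by decide)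
      · exact iff_of_true h1 (by decide)
      · exact iff_of_false (lt_irrefl _) (by decide)
      · exact iff_of_false (not_lt.2 (le_of_lt h2)) (by decide)
      · exact iff_of_true (lt_trans h2 h1) (by decide)
      · exact iff_of_true h2 (by decide)
      · exact iff_of_false (lt_irrefl _) (by decide)

lemma juxt231_iff (σ : Equiv.Perm (Fin n)) :
    JuxtAv p231 p12 σ ↔ ¬ Has231 (prefFn σ) := by
  constructor
  · rintro ⟨k, hkn, h1, h2⟩
    have hk0 : k0 σ ≤ k := k0_le ((dec_iff σ k).1 h2)
    intro hc
    exact h1 (containsIn_mono ((has231_iff σ (k0 σ) (k0_le_n σ)).2 hc)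
      (fun i hi => lt_of_lt_of_le hi hk0))
  · intro h
    exact ⟨k0 σ, k0_le_n σ, (has231_iff σ (k0 σ) (k0_le_n σ)).not.2 h,
      (dec_iff σ (k0 σ)).2 (k0_mem σ)⟩

lemma juxt321_iff (σ : Equiv.Perm (Fin n)) :
    JuxtAv p321 p12 σ ↔ ¬ Has321 (prefFn σ) := by
  constructor
  · rintro ⟨k, hkn, h1, h2⟩
    have hk0 : k0 σ ≤ k := k0_le ((dec_iff σ k).1 h2)
    intro hc
    exact h1 (containsIn_mono ((has321_iff σ (k0 σ) (k0_le_n σ)).2 hc)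
      (fun i hi => lt_of_lt_of_le hi hk0))
  · intro h
    exact ⟨k0 σ, k0_le_n σ, (has321_iff σ (k0 σ) (k0_le_n σ)).not.2 h,
      (dec_iff σ (k0 σ)).2 (k0_mem σ)⟩

structure Dat (n : ℕ) where
  k : ℕ
  s : Fin n → Fin n
  hk : k = 0 ∨ k < n
  hdec : ∀ i j : Fin n, k ≤ (i : ℕ) → i < j → s j < s i
  hid : ∀ i : Fin n, (i : ℕ) < k → s i = i

def Vd (d : Dat n) : Finset (Fin n) :=
  ((Finset.univ.filter (fun i : Fin n => d.k ≤ (i : ℕ))).image d.s)ᶜ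

def bnd (d : Dat n) : ℕ := if h : d.k < n then ((d.s ⟨d.k, h⟩ : Fin n) : ℕ) else 0

def Fib (Hs : ∀ m : ℕ, (Fin m → Fin n) → Prop) (d : Dat n) : Type :=
  {w : Fin d.k → Fin n // (Function.Injective w ∧ Finset.univ.image w = Vd d) ∧
    (¬ Hs d.k w ∧ ∀ h : 0 < d.k, ((w ⟨d.k - 1, Nat.sub_lt h Nat.one_pos⟩ : Fin n) : ℕ) < bnd d)}

instance (Hs : ∀ m : ℕ, (Fin m → Fin n) → Prop) (d : Dat n) : Finite (Fib Hs d) :=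
  Subtype.finite

lemma hs_congr (Hs : ∀ m : ℕ, (Fin m → Fin n) → Prop) {m m' : ℕ} (e : m = m')
    (f : Fin m → Fin n) (f' : Fin m' → Fin n)
    (h : ∀ i : Fin m, f i = f' ⟨i.1, e ▸ i.isLt⟩) : Hs m f ↔ Hs m' f' := by
  subst e
  have : f = f' := funext fun i => by rw [h i]
  rw [this]

/-- canonical data associated to a permutation -/
noncomputable def dOf (σ : Equiv.Perm (Fin n)) : Dat n where
  k := k0 σ
  s := fun i => if (i : ℕ) < k0 σ then i else σ i
  hk := k0_or σ
  hdec := by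
    intro i j hi hij
    have hj : k0 σ ≤ (j : ℕ) := le_trans hi (le_of_lt (Fin.lt_def.1 hij))
    show (if (j : ℕ) < k0 σ then j else σ j) < (if (i : ℕ) < k0 σ then i else σ i)
    rw [if_neg (not_lt.2 hi), if_neg (not_lt.2 hj)]
    exact k0_mem σ i j hi hij
  hid := fun i hi => if_pos hi

lemma dOf_k (σ : Equiv.Perm (Fin n)) : (dOf σ).k = k0 σ := rfl

lemma dOf_s_suffix (σ : Equiv.Perm (Fin n)) (j : Fin n) (hj : k0 σ ≤ (j : ℕ)) :
    (dOf σ).s j = σ j := if_neg (not_lt.2 hj)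

lemma dOf_s_prefix (σ : Equiv.Perm (Fin n)) (j : Fin n) (hj : (j : ℕ) < k0 σ) :
    (dOf σ).s j = j := if_pos hj

lemma image_prefFn (σ : Equiv.Perm (Fin n)) :
    Finset.univ.image (prefFn σ) = Vd (dOf σ) := by
  ext x
  simp only [Vd, mem_compl, mem_image, mem_univ, true_and, mem_filter, dOf_k]
  constructor
  · rintro ⟨i, rfl⟩
    rintro ⟨j, hj, hjx⟩
    rw [dOf_s_suffix σ j (mem_filter.1 hj).2] at hjx
    have hji := σ.injective hjx
    have : (j : ℕ) < k0 σ := by rw [hji]; exact i.isLt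
    exact absurd this (not_lt.2 (mem_filter.1 hj).2)
  · intro hx
    by_cases hp : ((σ.symm x : Fin n) : ℕ) < k0 σ
    · refine ⟨⟨((σ.symm x : Fin n) : ℕ), hp⟩, ?_⟩
      show σ (Fin.castLE (k0_le_n σ) ⟨((σ.symm x : Fin n) : ℕ), hp⟩) = x
      rw [show Fin.castLE (k0_le_n σ) ⟨((σ.symm x : Fin n) : ℕ), hp⟩ = σ.symm x from Fin.ext rfl]
      exact σ.apply_symm_apply x
    · exact absurd ⟨σ.symm x, mem_filter.2 ⟨mem_univ _, not_lt.1 hp⟩,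
        by rw [dOf_s_suffix σ _ (not_lt.1 hp)]; exact σ.apply_symm_apply x⟩ hx


lemma prefFn_inj (σ : Equiv.Perm (Fin n)) : Injective (prefFn σ) := by
  intro a b hab
  have := σ.injective hab
  have hv := congrArg Fin.val this
  exact Fin.ext hv

lemma boundary (σ : Equiv.Perm (Fin n)) (h : 0 < k0 σ) :
    ((prefFn σ ⟨k0 σ - 1, Nat.sub_lt h Nat.one_pos⟩ : Fin n) : ℕ) < bnd (dOf σ) := by
  have hkn : k0 σ < n := (k0_or σ).resolve_left (by omega)
  have hb : bnd (dOf σ) = (((dOf σ).s ⟨k0 σ, hkn⟩ : Fin n) : ℕ) := dif_pos hkn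
  rw [hb, dOf_s_suffix σ _ (le_refl _)]
  by_contra hc
  push_neg at hc
  have hne : (σ (⟨k0 σ, hkn⟩ : Fin n) : ℕ)
      ≠ (σ (Fin.castLE (k0_le_n σ) ⟨k0 σ - 1, Nat.sub_lt h Nat.one_pos⟩) : ℕ) := by
    intro he
    have := σ.injective (Fin.ext he)
    have hv := congrArg Fin.val this
    simp only [Fin.coe_castLE] at hv
    omega
  have hlt' : (σ (⟨k0 σ, hkn⟩ : Fin n) : ℕ)
      < (σ (Fin.castLE (k0_le_n σ) ⟨k0 σ - 1, Nat.sub_lt h Nat.one_pos⟩) : ℕ) :=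
    lt_of_le_of_ne hc hne
  apply k0_min h
  intro i j hi hij
  by_cases hik : k0 σ ≤ (i : ℕ)
  · exact k0_mem σ i j hik hij
  · have hival : (i : ℕ) = k0 σ - 1 := by omega
    have hieq : i = Fin.castLE (k0_le_n σ) ⟨k0 σ - 1, Nat.sub_lt h Nat.one_pos⟩ :=
      Fin.ext (by simpa using hival)
    have hjval : k0 σ ≤ (j : ℕ) := by
      have := Fin.lt_def.1 hij
      omega
    by_cases hjk : (j : ℕ) = k0 σ
    · have hjeq : j = ⟨k0 σ, hkn⟩ := Fin.ext hjk
      rw [hieq, hjeq]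
      exact Fin.lt_def.2 hlt'
    · have hlt2 : (⟨k0 σ, hkn⟩ : Fin n) < j := Fin.lt_def.2 (by simp; omega)
      have h2 := k0_mem σ ⟨k0 σ, hkn⟩ j (le_refl _) hlt2
      rw [hieq]
      exact lt_trans h2 (Fin.lt_def.2 hlt')

def bldFun (d : Dat n) (w : Fin d.k → Fin n) : Fin n → Fin n :=
  fun i => if h : (i : ℕ) < d.k then w ⟨i, h⟩ else d.s i

lemma bld_inj (d : Dat n) (w : Fin d.k → Fin n) (hinj : Injective w)
    (himg : Finset.univ.image w = Vd d) : Injective (bldFun d w) := by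
  have hcross : ∀ (a b : Fin n) (ha : (a : ℕ) < d.k), ¬ ((b : ℕ) < d.k) →
      w ⟨a, ha⟩ ≠ d.s b := by
    intro a b ha hb he
    have hmem : w ⟨a, ha⟩ ∈ Vd d := by
      rw [← himg]
      exact mem_image_of_mem _ (mem_univ _)
    rw [Vd, mem_compl] at hmem
    exact hmem (mem_image.2 ⟨b, mem_filter.2 ⟨mem_univ _, not_lt.1 hb⟩, he.symm⟩)
  intro a b hab
  unfold bldFun at hab
  by_cases ha : (a : ℕ) < d.k <;> by_cases hb : (b : ℕ) < d.k
  · rw [dif_pos ha, dif_pos hb] at hab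
    have h2 := congrArg Fin.val (hinj hab)
    exact Fin.ext h2
  · rw [dif_pos ha, dif_neg hb] at hab
    exact absurd hab (hcross a b ha hb)
  · rw [dif_neg ha, dif_pos hb] at hab
    exact absurd hab.symm (hcross b a hb ha)
  · rw [dif_neg ha, dif_neg hb] at hab
    rcases lt_trichotomy a b with h | h | h
    · exact absurd hab (ne_of_gt (d.hdec a b (not_lt.1 ha) h))
    · exact h
    · exact absurd hab.symm (ne_of_gt (d.hdec b a (not_lt.1 hb) h))

noncomputable def bld (d : Dat n) (w : Fin d.k → Fin n) (hinj : Injective w)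
    (himg : Finset.univ.image w = Vd d) : Equiv.Perm (Fin n) :=
  Equiv.ofBijective _ ((Finite.injective_iff_bijective).1 (bld_inj d w hinj himg))

lemma bld_pre (d : Dat n) (w : Fin d.k → Fin n) (hinj) (himg) (i : Fin n)
    (h : (i : ℕ) < d.k) : bld d w hinj himg i = w ⟨i, h⟩ := dif_pos h

lemma bld_suf (d : Dat n) (w : Fin d.k → Fin n) (hinj) (himg) (i : Fin n)
    (h : d.k ≤ (i : ℕ)) : bld d w hinj himg i = d.s i := dif_neg (not_lt.2 h)

lemma k0_bld (d : Dat n) (w : Fin d.k → Fin n) (hinj) (himg)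
    (hbound : ∀ h : 0 < d.k, ((w ⟨d.k - 1, Nat.sub_lt h Nat.one_pos⟩ : Fin n) : ℕ) < bnd d) :
    k0 (bld d w hinj himg) = d.k := by
  have hdec : DecP (bld d w hinj himg) d.k := by
    intro i j hi hij
    rw [bld_suf d w hinj himg i hi,
      bld_suf d w hinj himg j (le_trans hi (le_of_lt (Fin.lt_def.1 hij)))]
    exact d.hdec i j hi hij
  have hle := k0_le hdec
  by_contra hne
  have hlt : k0 (bld d w hinj himg) < d.k := by omega
  have h0 : 0 < d.k := by omega
  have hkn : d.k < n := d.hk.resolve_left (by omega)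
  have hd1 : DecP (bld d w hinj himg) (d.k - 1) := dec_mono (k0_mem _) (by omega)
  have hij : (⟨d.k - 1, by omega⟩ : Fin n) < ⟨d.k, hkn⟩ := Fin.lt_def.2 (by simp; omega)
  have hval := hd1 ⟨d.k - 1, by omega⟩ ⟨d.k, hkn⟩ (by simp) hij
  rw [bld_suf d w hinj himg ⟨d.k, hkn⟩ (by simp),
    bld_pre d w hinj himg ⟨d.k - 1, by omega⟩ (by simp; omega)] at hval
  have hb := hbound h0
  rw [bnd, dif_pos hkn] at hb
  have hv : (((d.s ⟨d.k, hkn⟩ : Fin n)) : ℕ)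
      < ((w ⟨d.k - 1, Nat.sub_lt h0 Nat.one_pos⟩ : Fin n) : ℕ) := Fin.lt_def.1 hval
  omega

lemma fib_ext (Hs : ∀ m : ℕ, (Fin m → Fin n) → Prop) :
    ∀ (d₁ d₂ : Dat n) (x₁ : Fib Hs d₁) (x₂ : Fib Hs d₂),
    d₁.k = d₂.k → d₁.s = d₂.s →
    (∀ (i : ℕ) (h1 : i < d₁.k) (h2 : i < d₂.k), x₁.1 ⟨i, h1⟩ = x₂.1 ⟨i, h2⟩) →
    (⟨d₁, x₁⟩ : Σ d : Dat n, Fib Hs d) = ⟨d₂, x₂⟩ := by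
  rintro ⟨k₁, s₁, a₁, b₁, c₁⟩ ⟨k₂, s₂, a₂, b₂, c₂⟩ x₁ x₂ hk hs hw
  dsimp only at hk hs
  subst hk
  subst hs
  have hx : x₁ = x₂ := Subtype.ext (funext fun i => hw i.1 i.isLt i.isLt)
  rw [hx]

noncomputable def globalEquiv (Hs : ∀ m : ℕ, (Fin m → Fin n) → Prop) :
    {σ : Equiv.Perm (Fin n) // ¬ Hs (k0 σ) (prefFn σ)} ≃ Σ d : Dat n, Fib Hs d where
  toFun := fun x => ⟨dOf x.1, ⟨prefFn x.1,
    ⟨⟨prefFn_inj x.1, image_prefFn x.1⟩, ⟨x.2, fun h => boundary x.1 h⟩⟩⟩⟩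
  invFun := fun y =>
    ⟨bld y.1 y.2.1 y.2.2.1.1 y.2.2.1.2, by
      have e : k0 (bld y.1 y.2.1 y.2.2.1.1 y.2.2.1.2) = y.1.k :=
        k0_bld y.1 y.2.1 y.2.2.1.1 y.2.2.1.2 y.2.2.2.2
      have hiff := hs_congr Hs e (prefFn (bld y.1 y.2.1 y.2.2.1.1 y.2.2.1.2)) y.2.1
        (fun i => by
          show bld y.1 y.2.1 y.2.2.1.1 y.2.2.1.2 (Fin.castLE _ i) = _
          rw [bld_pre y.1 y.2.1 y.2.2.1.1 y.2.2.1.2 (Fin.castLE _ i)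
            (by show (i : ℕ) < y.1.k; exact lt_of_lt_of_le i.isLt (le_of_eq e))]
          rfl)
      exact fun hc => y.2.2.2.1 (hiff.1 hc)⟩
  left_inv := by
    rintro ⟨σ, hσ⟩
    apply Subtype.ext
    apply Equiv.ext
    intro i
    by_cases h : (i : ℕ) < k0 σ
    · show bldFun (dOf σ) (prefFn σ) i = σ i
      simp only [bldFun]
      rw [dif_pos (show (i : ℕ) < (dOf σ).k from h)]
      exact congrArg σ (Fin.ext rfl)
    · show bldFun (dOf σ) (prefFn σ) i = σ i
      simp only [bldFun]
      rw [dif_neg (show ¬ ((i : ℕ) < (dOf σ).k) from h)]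
      exact dOf_s_suffix σ i (not_lt.1 h)
  right_inv := by
    rintro ⟨d, w, ⟨hinj, himg⟩, hns, hbd⟩
    have e : k0 (bld d w hinj himg) = d.k := k0_bld d w hinj himg hbd
    dsimp only
    apply fib_ext
    · exact e
    · funext i
      by_cases h : (i : ℕ) < d.k
      · rw [dOf_s_prefix _ i (by rw [e]; exact h), d.hid i h]
      · rw [dOf_s_suffix _ i (by rw [e]; exact not_lt.1 h),
          bld_suf d w hinj himg i (not_lt.1 h)]
    · intro i h1 h2
      show bld d w hinj himg (Fin.castLE _ ⟨i, h1⟩) = w ⟨i, h2⟩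
      exact (bld_pre d w hinj himg (Fin.castLE _ ⟨i, h1⟩) (show i < d.k from h2))


end AvJuxt

open AvJuxt in

theorem stmt (n : ℕ) :
    Nat.card {σ : Equiv.Perm (Fin n) // JuxtAv p231 p12 σ}
      = Nat.card {σ : Equiv.Perm (Fin n) // JuxtAv p321 p12 σ} := by
  have e231 : {σ : Equiv.Perm (Fin n) // JuxtAv p231 p12 σ}
      ≃ {σ : Equiv.Perm (Fin n) // ¬ Has231 (prefFn σ)} :=
    Equiv.subtypeEquivRight (fun σ => juxt231_iff σ)
  have e321 : {σ : Equiv.Perm (Fin n) // JuxtAv p321 p12 σ}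
      ≃ {σ : Equiv.Perm (Fin n) // ¬ Has321 (prefFn σ)} :=
    Equiv.subtypeEquivRight (fun σ => juxt321_iff σ)
  rw [Nat.card_congr (e231.trans (globalEquiv (fun m (w : Fin m → Fin n) => Has231 w)))]
  rw [Nat.card_congr (e321.trans (globalEquiv (fun m (w : Fin m → Fin n) => Has321 w)))]
  exact Nat.card_congr (Equiv.sigmaCongrRight (fun d =>
    Classical.choice (Finite.card_eq.1 (fiber_eq d.k (Vd d) (bnd d)))))
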